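/- Let C be a v×v real symmetric positive semidefinite matrix, let W be a v×v real symmetric positive semidefinite matrix of rank d whose column space is contained in the column space of C, let K be a v×d real matrix of rank d with K Kᵀ = W, and let W^{1/2} denote the positive semidefinite square root of W. Then the d×d matrix M = (Kᵀ C⁺ K)^{−1} and the v×v matrix N = (W^{1/2} C⁺ W^{1/2})⁺ have the same nonzero eigenvalues including multiplicities; that is, for every real λ ≠ 0, the dimension of the kernel of M − λ·I_d equals the dimension of the kernel of N − λ·I_v. -/

import Mathlib

open Matrix

/-- The column space of a real matrix. -/
def colSpace {m n : ℕ} (A : Matrix (Fin m) (Fin n) ℝ) : Submodule ℝ (Fin m → ℝ) :=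
  LinearMap.range A.mulVecLin

/-- `B` is the Moore–Penrose pseudoinverse of `A`. -/
def IsMPInv {m n : ℕ} (A : Matrix (Fin m) (Fin n) ℝ) (B : Matrix (Fin n) (Fin m) ℝ) : Prop :=
  A * B * A = A ∧ B * A * B = B ∧ (A * B)ᵀ = A * B ∧ (B * A)ᵀ = B * A

lemma mpInv_unique {m n : ℕ} {A : Matrix (Fin m) (Fin n) ℝ} {B₁ B₂ : Matrix (Fin n) (Fin m) ℝ}
    (h1 : IsMPInv A B₁) (h2 : IsMPInv A B₂) : B₁ = B₂ := by
  obtain ⟨a1, b1, c1, d1⟩ := h1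
  obtain ⟨a2, b2, c2, d2⟩ := h2
  have hAB : A * B₁ = A * B₂ := by
    calc A * B₁ = (A * B₁)ᵀ := c1.symm
      _ = B₁ᵀ * Aᵀ := transpose_mul _ _
      _ = B₁ᵀ * (A * B₂ * A)ᵀ := by rw [a2]
      _ = B₁ᵀ * (Aᵀ * (A * B₂)ᵀ) := by rw [transpose_mul (A * B₂) A]
      _ = (B₁ᵀ * Aᵀ) * (A * B₂)ᵀ := by rw [Matrix.mul_assoc]
      _ = (A * B₁)ᵀ * (A * B₂)ᵀ := by rw [← transpose_mul]
      _ = (A * B₁) * (A * B₂) := by rw [c1, c2]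
      _ = ((A * B₁) * A) * B₂ := by simp only [Matrix.mul_assoc]
      _ = A * B₂ := by rw [a1]
  have hBA : B₁ * A = B₂ * A := by
    calc B₁ * A = (B₁ * A)ᵀ := d1.symm
      _ = Aᵀ * B₁ᵀ := transpose_mul _ _
      _ = (A * B₂ * A)ᵀ * B₁ᵀ := by rw [a2]
      _ = (Aᵀ * (A * B₂)ᵀ) * B₁ᵀ := by rw [transpose_mul (A * B₂) A]
      _ = (Aᵀ * (B₂ᵀ * Aᵀ)) * B₁ᵀ := by rw [transpose_mul A B₂]
      _ = ((Aᵀ * B₂ᵀ) * Aᵀ) * B₁ᵀ := by rw [Matrix.mul_assoc Aᵀ B₂ᵀ Aᵀ]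
      _ = (Aᵀ * B₂ᵀ) * (Aᵀ * B₁ᵀ) := Matrix.mul_assoc _ _ _
      _ = (B₂ * A)ᵀ * (B₁ * A)ᵀ := by rw [transpose_mul B₂ A, transpose_mul B₁ A]
      _ = (B₂ * A) * (B₁ * A) := by rw [d2, d1]
      _ = B₂ * ((A * B₁) * A) := by rw [Matrix.mul_assoc, Matrix.mul_assoc]
      _ = B₂ * A := by rw [a1]
  calc B₁ = B₁ * A * B₁ := b1.symm
    _ = B₂ * A * B₁ := by rw [hBA]
    _ = B₂ * (A * B₁) := Matrix.mul_assoc _ _ _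
    _ = B₂ * (A * B₂) := by rw [hAB]
    _ = B₂ * A * B₂ := (Matrix.mul_assoc _ _ _).symm
    _ = B₂ := b2

lemma inj_of_kerzero {n : ℕ} (A : Matrix (Fin n) (Fin n) ℝ)
    (h : ∀ x, A *ᵥ x = 0 → x = 0) : Function.Injective A.mulVec := by
  have hk : LinearMap.ker A.mulVecLin = ⊥ :=
    LinearMap.ker_eq_bot'.mpr fun x hx => h x (by simpa using hx)
  have hi := LinearMap.ker_eq_bot.mp hk
  intro x y hxy
  exact hi (by simpa using hxy)

lemma dot_shift {m n : ℕ} (A : Matrix (Fin m) (Fin n) ℝ) (x : Fin m → ℝ) (y : Fin n → ℝ) :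
    x ⬝ᵥ (A *ᵥ y) = (Aᵀ *ᵥ x) ⬝ᵥ y := by
  rw [dotProduct_mulVec, mulVec_transpose]

theorem stmt6 (v d : ℕ) (C W : Matrix (Fin v) (Fin v) ℝ) (hC : C.PosSemidef) (hW : W.PosSemidef)
    (hWrank : W.rank = d) (hcol : colSpace W ≤ colSpace C)
    (K : Matrix (Fin v) (Fin d) ℝ) (hKrank : K.rank = d) (hKW : K * Kᵀ = W)
    (Wsq : Matrix (Fin v) (Fin v) ℝ) (hWsq : Wsq.PosSemidef) (hWsqW : Wsq * Wsq = W)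
    (Cp : Matrix (Fin v) (Fin v) ℝ) (hCp : IsMPInv C Cp)
    (N : Matrix (Fin v) (Fin v) ℝ) (hN : IsMPInv (Wsq * Cp * Wsq) N) :
    ∀ μ : ℝ, μ ≠ 0 →
      Module.finrank ℝ (LinearMap.ker (((Kᵀ * Cp * K)⁻¹ - μ • 1).mulVecLin)) =
        Module.finrank ℝ (LinearMap.ker ((N - μ • 1).mulVecLin)) := by
  intro μ hμ
  obtain ⟨p1, p2, p3, p4⟩ := hCp
  have hCsym : Cᵀ = C := by
    have := hC.isHermitian
    rwa [Matrix.IsHermitian, conjTranspose_eq_transpose_of_trivial] at this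
  have hWsqsym : Wsqᵀ = Wsq := by
    have := hWsq.isHermitian
    rwa [Matrix.IsHermitian, conjTranspose_eq_transpose_of_trivial] at this
  -- K has full column rank
  have hKker : ∀ x, K *ᵥ x = 0 → x = 0 := by
    have h1 := LinearMap.finrank_range_add_finrank_ker K.mulVecLin
    have h2 : Module.finrank ℝ (LinearMap.range K.mulVecLin) = d := hKrank
    rw [h2, Module.finrank_pi, Fintype.card_fin] at h1
    have h3 : Module.finrank ℝ (LinearMap.ker K.mulVecLin) = 0 := by omega
    have h4 : LinearMap.ker K.mulVecLin = ⊥ := Submodule.finrank_eq_zero.mp h3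
    intro x hx
    have : x ∈ LinearMap.ker K.mulVecLin := by simpa using hx
    simpa [h4] using this
  -- Kᵀ * K is invertible
  have hKtKunit : IsUnit (Kᵀ * K) := by
    apply Matrix.mulVec_injective_iff_isUnit.mp
    apply inj_of_kerzero
    intro x hx
    have h0 : x ⬝ᵥ ((Kᵀ * K) *ᵥ x) = 0 := by rw [hx, dotProduct_zero]
    rw [← Matrix.mulVec_mulVec, dot_shift, transpose_transpose] at h0
    exact hKker x (dotProduct_self_eq_zero.mp h0)
  set G := (Kᵀ * K)⁻¹ with hGdef
  have hG1 : (Kᵀ * K) * G = 1 :=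
    Matrix.mul_nonsing_inv _ ((Matrix.isUnit_iff_isUnit_det _).mp hKtKunit)
  have hG2 : G * (Kᵀ * K) = 1 :=
    Matrix.nonsing_inv_mul _ ((Matrix.isUnit_iff_isUnit_det _).mp hKtKunit)
  have hGsym : Gᵀ = G := by
    rw [hGdef, Matrix.transpose_nonsing_inv, transpose_mul, transpose_transpose]
  set Z : Matrix (Fin d) (Fin v) ℝ := G * Kᵀ * Wsq with hZdef
  have hZWsq : Z * Wsq = Kᵀ := by
    rw [hZdef]
    calc G * Kᵀ * Wsq * Wsq = G * (Kᵀ * (Wsq * Wsq)) := by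
          simp only [Matrix.mul_assoc]
      _ = G * (Kᵀ * (K * Kᵀ)) := by rw [hWsqW, ← hKW]
      _ = (G * (Kᵀ * K)) * Kᵀ := by simp only [Matrix.mul_assoc]
      _ = Kᵀ := by rw [hG2, Matrix.one_mul]
  have hZt : Zᵀ = Wsq * (K * G) := by
    rw [hZdef, transpose_mul, transpose_mul, transpose_transpose, hGsym, hWsqsym]
  have hZZt : Z * Zᵀ = 1 := by
    rw [hZt, ← Matrix.mul_assoc, hZWsq, ← Matrix.mul_assoc, hG1]
  -- K * Z = Wsq
  have hKZ : K * Z = Wsq := by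
    have hE : (Wsq - K * Z) * (Wsq - K * Z)ᵀ = 0 := by
      have e1 : (K * Z) * Wsq = W := by rw [Matrix.mul_assoc, hZWsq, hKW]
      have e2 : (K * Z) * (K * Z)ᵀ = W := by
        rw [transpose_mul, ← Matrix.mul_assoc, Matrix.mul_assoc K Z Zᵀ, hZZt,
          Matrix.mul_one, hKW]
      have hWsym : Wᵀ = W := by
        have := hW.isHermitian
        rwa [Matrix.IsHermitian, conjTranspose_eq_transpose_of_trivial] at this
      have e3 : Wsq * (K * Z)ᵀ = W := by
        have h := congrArg transpose e1
        rwa [transpose_mul, hWsqsym, hWsym] at h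
      rw [transpose_sub, hWsqsym, Matrix.sub_mul, Matrix.mul_sub, Matrix.mul_sub,
        hWsqW, e1, e2, e3]
      simp only [sub_sub_cancel, sub_self]
    have hE2 : ((Wsq - K * Z)ᵀ)ᴴ * (Wsq - K * Z)ᵀ = 0 := by
      rwa [conjTranspose_eq_transpose_of_trivial, transpose_transpose]
    have ht := conjTranspose_mul_self_eq_zero.mp hE2
    have h0 : Wsq - K * Z = 0 := by
      have h := congrArg transpose ht
      simpa using h
    exact (sub_eq_zero.mp h0).symm
  -- A := Kᵀ * Cp * K is invertible
  set A := Kᵀ * Cp * K with hAdef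
  have hAunit : IsUnit A := by
    apply Matrix.mulVec_injective_iff_isUnit.mp
    apply inj_of_kerzero
    intro x hx
    -- K *ᵥ x is in the column space of W
    have hmem : K *ᵥ x ∈ colSpace W := by
      refine ⟨(K * G) *ᵥ x, ?_⟩
      have : W * (K * G) = K := by
        rw [← hKW, Matrix.mul_assoc, ← Matrix.mul_assoc Kᵀ K G, hG1, Matrix.mul_one]
      simp only [mulVecLin_apply, Matrix.mulVec_mulVec, this]
    obtain ⟨z, hz⟩ := hcol hmem
    simp only [mulVecLin_apply] at hz
    have h0 : x ⬝ᵥ (A *ᵥ x) = 0 := by rw [hx, dotProduct_zero]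
    have h1 : x ⬝ᵥ (A *ᵥ x) = (K *ᵥ x) ⬝ᵥ (Cp *ᵥ (K *ᵥ x)) := by
      rw [hAdef, ← Matrix.mulVec_mulVec, ← Matrix.mulVec_mulVec, dot_shift,
        transpose_transpose]
    have h2 : z ⬝ᵥ (C *ᵥ z) = 0 := by
      have e : z ⬝ᵥ ((C * Cp * C) *ᵥ z) = (C *ᵥ z) ⬝ᵥ (Cp *ᵥ (C *ᵥ z)) := by
        rw [← Matrix.mulVec_mulVec, ← Matrix.mulVec_mulVec, dot_shift C z, hCsym]
      rw [h1, ← hz, ← e, p1] at h0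
      exact h0
    have h3 : C *ᵥ z = 0 := by
      have := (hC.dotProduct_mulVec_zero_iff z).mp (by simpa using h2)
      exact this
    have h4 : K *ᵥ x = 0 := by rw [← hz, h3]
    exact hKker x h4
  have hAdetu : IsUnit A.det := (Matrix.isUnit_iff_isUnit_det _).mp hAunit
  set M := A⁻¹ with hMdef
  have hM1 : A * M = 1 := Matrix.mul_nonsing_inv _ hAdetu
  have hM2 : M * A = 1 := Matrix.nonsing_inv_mul _ hAdetu
  -- B = Zᵀ * A * Z
  have hZtKt : Zᵀ * Kᵀ = Wsq := by
    rw [← transpose_mul, hKZ, hWsqsym]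
  have hB : Wsq * Cp * Wsq = Zᵀ * A * Z := by
    have h : Zᵀ * (Kᵀ * Cp * K) * Z = (Zᵀ * Kᵀ) * Cp * (K * Z) := by
      simp only [Matrix.mul_assoc]
    rw [hAdef, h, hZtKt, hKZ]
  -- N₀ := Zᵀ * M * Z is the MP inverse of B
  have hN0 : IsMPInv (Wsq * Cp * Wsq) (Zᵀ * M * Z) := by
    have key : ∀ P Q : Matrix (Fin d) (Fin d) ℝ,
        (Zᵀ * P * Z) * (Zᵀ * Q * Z) = Zᵀ * (P * Q) * Z := by
      intro P Q
      calc (Zᵀ * P * Z) * (Zᵀ * Q * Z) = Zᵀ * (P * ((Z * Zᵀ) * (Q * Z))) := by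
            simp only [Matrix.mul_assoc]
        _ = Zᵀ * (P * Q) * Z := by
            rw [hZZt]
            simp only [Matrix.one_mul, Matrix.mul_assoc]
    refine ⟨?_, ?_, ?_, ?_⟩
    · rw [hB, key, key, Matrix.mul_assoc A M A, hM2, Matrix.mul_one]
    · rw [hB, key, key, Matrix.mul_assoc M A M, hM1, Matrix.mul_one]
    · rw [hB, key, hM1]
      simp [Matrix.transpose_mul, Matrix.mul_assoc]
    · rw [hB, key, hM2]
      simp [Matrix.transpose_mul, Matrix.mul_assoc]
  have hNeq : N = Zᵀ * M * Z := mpInv_unique hN hN0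
  -- the two kernels are linearly equivalent
  have hcomm1 : (N - μ • 1) * Zᵀ = Zᵀ * (M - μ • 1) := by
    rw [hNeq]
    simp only [Matrix.sub_mul, Matrix.mul_sub, Matrix.smul_mul, Matrix.mul_smul,
      Matrix.one_mul, Matrix.mul_one, Matrix.mul_assoc]
    rw [hZZt, Matrix.mul_one]
  have hcomm2 : (M - μ • 1) * Z = Z * (N - μ • 1) := by
    rw [hNeq]
    simp only [Matrix.sub_mul, Matrix.mul_sub, Matrix.smul_mul, Matrix.mul_smul,
      Matrix.one_mul, Matrix.mul_one, Matrix.mul_assoc]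
    rw [← Matrix.mul_assoc Z Zᵀ (M * Z), hZZt, Matrix.one_mul]
  have hZZN : (Zᵀ * Z) * N = N := by
    rw [hNeq]
    simp only [Matrix.mul_assoc]
    rw [← Matrix.mul_assoc Z Zᵀ (M * Z), hZZt, Matrix.one_mul]
  set L1 := (M - μ • (1 : Matrix (Fin d) (Fin d) ℝ)).mulVecLin with hL1
  set L2 := ((N : Matrix (Fin v) (Fin v) ℝ) - μ • 1).mulVecLin with hL2
  have hf : ∀ x ∈ LinearMap.ker L1, Zᵀ.mulVecLin x ∈ LinearMap.ker L2 := by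
    intro x hx
    have hx' : (M - μ • 1) *ᵥ x = 0 := by simpa [hL1, LinearMap.mem_ker, Matrix.sub_mulVec, Matrix.smul_mulVec, Matrix.one_mulVec] using hx
    simp only [LinearMap.mem_ker, mulVecLin_apply, hL2]
    rw [Matrix.mulVec_mulVec, hcomm1, ← Matrix.mulVec_mulVec, hx', Matrix.mulVec_zero]
  have hg : ∀ y ∈ LinearMap.ker L2, Z.mulVecLin y ∈ LinearMap.ker L1 := by
    intro y hy
    have hy' : (N - μ • 1) *ᵥ y = 0 := by simpa [hL2, LinearMap.mem_ker, Matrix.sub_mulVec, Matrix.smul_mulVec, Matrix.one_mulVec] using hy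
    simp only [LinearMap.mem_ker, mulVecLin_apply, hL1]
    rw [Matrix.mulVec_mulVec, hcomm2, ← Matrix.mulVec_mulVec, hy', Matrix.mulVec_zero]
  let f : LinearMap.ker L1 →ₗ[ℝ] LinearMap.ker L2 := (Zᵀ.mulVecLin).restrict hf
  let g : LinearMap.ker L2 →ₗ[ℝ] LinearMap.ker L1 := (Z.mulVecLin).restrict hg
  have hgf : ∀ x : LinearMap.ker L1, g (f x) = x := by
    intro ⟨x, hx⟩
    apply Subtype.ext
    show Z *ᵥ (Zᵀ *ᵥ x) = x
    rw [Matrix.mulVec_mulVec, hZZt, Matrix.one_mulVec]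
  have hfg : ∀ y : LinearMap.ker L2, f (g y) = y := by
    intro ⟨y, hy⟩
    apply Subtype.ext
    show Zᵀ *ᵥ (Z *ᵥ y) = y
    have hy' : (N - μ • 1) *ᵥ y = 0 := by simpa [hL2, Matrix.sub_mulVec, Matrix.smul_mulVec, Matrix.one_mulVec] using hy
    have hNy : N *ᵥ y = μ • y := by
      have h := hy'
      rw [Matrix.sub_mulVec, Matrix.smul_mulVec, Matrix.one_mulVec,
        sub_eq_zero] at h
      exact h
    have : (Zᵀ * Z) *ᵥ (N *ᵥ y) = N *ᵥ y := by
      rw [Matrix.mulVec_mulVec, hZZN]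
    rw [hNy] at this
    rw [Matrix.mulVec_mulVec]
    have h5 : (Zᵀ * Z) *ᵥ (μ • y) = μ • ((Zᵀ * Z) *ᵥ y) := Matrix.mulVec_smul _ _ _
    rw [h5] at this
    have h6 : (Zᵀ * Z) *ᵥ y = μ⁻¹ • (μ • y) := by
      rw [← this, smul_smul, inv_mul_cancel₀ hμ, one_smul]
    rw [h6, smul_smul, inv_mul_cancel₀ hμ, one_smul]
  let e : LinearMap.ker L1 ≃ₗ[ℝ] LinearMap.ker L2 :=
    { toLinearMap := f, invFun := g, left_inv := hgf, right_inv := hfg }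
  exact e.finrank_eq
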